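/- Let n ≥ 1 and let z₁,…,zₙ be real numbers, all ≠ 1, and set aᵢ = 1 + 2zᵢ/(zᵢ−1)². If 0 ≤ aᵢ ≤ 1 for every i, then T(φ) ≤ T(0) for every real φ. -/

import Mathlib

/-- `ψ_{z₀}(z) = |z - z₀|² / |1 - z₀|²`. -/
noncomputable def psi (z₀ z : ℂ) : ℝ :=
  ‖z - z₀‖ ^ 2 / ‖1 - z₀‖ ^ 2

/-- `T(φ) = ∏ᵢ ψ_{zᵢ}(e^{iφ}) + ∏ᵢ ψ_{zᵢ}(-e^{iφ})` for real roots `zᵢ`. -/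
noncomputable def T {n : ℕ} (z : Fin n → ℝ) (φ : ℝ) : ℝ :=
  (∏ i, psi (z i) (Complex.exp (φ * Complex.I))) +
    (∏ i, psi (z i) (-Complex.exp (φ * Complex.I)))

lemma psi_exp (z : ℝ) (hz : z ≠ 1) (φ : ℝ) :
    psi (z : ℂ) (Complex.exp (φ * Complex.I)) =
      (1 + 2*z/(z-1)^2) + (1 - (1 + 2*z/(z-1)^2)) * Real.cos φ := by
  have h1 : (z - 1) ≠ 0 := sub_ne_zero.mpr hz
  simp only [psi, Complex.sq_norm, Complex.normSq_apply, Complex.sub_re, Complex.sub_im,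
    Complex.exp_ofReal_mul_I_re, Complex.exp_ofReal_mul_I_im, Complex.one_re, Complex.one_im,
    Complex.ofReal_re, Complex.ofReal_im]
  have hs : Real.sin φ * Real.sin φ = 1 - Real.cos φ * Real.cos φ := by
    nlinarith [Real.sin_sq_add_cos_sq φ]
  have h2 : ((z:ℝ)-1)^2 ≠ 0 := pow_ne_zero _ h1
  have hd : ((1:ℝ)-z)*(1-z)+(0-0)*(0-0) = (z-1)^2 := by ring
  rw [hd, div_eq_iff h2]
  field_simp
  linear_combination (2*(z:ℝ) - z^2 + (z-1)^2) * Real.sin_sq_add_cos_sq φ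

lemma psi_nexp (z : ℝ) (hz : z ≠ 1) (φ : ℝ) :
    psi (z : ℂ) (-Complex.exp (φ * Complex.I)) =
      (1 + 2*z/(z-1)^2) - (1 - (1 + 2*z/(z-1)^2)) * Real.cos φ := by
  have h1 : (z - 1) ≠ 0 := sub_ne_zero.mpr hz
  simp only [psi, Complex.sq_norm, Complex.normSq_apply, Complex.sub_re, Complex.sub_im,
    Complex.neg_re, Complex.neg_im,
    Complex.exp_ofReal_mul_I_re, Complex.exp_ofReal_mul_I_im, Complex.one_re, Complex.one_im,
    Complex.ofReal_re, Complex.ofReal_im]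
  have hs : Real.sin φ * Real.sin φ = 1 - Real.cos φ * Real.cos φ := by
    nlinarith [Real.sin_sq_add_cos_sq φ]
  have h2 : ((z:ℝ)-1)^2 ≠ 0 := pow_ne_zero _ h1
  have hd : ((1:ℝ)-z)*(1-z)+(0-0)*(0-0) = (z-1)^2 := by ring
  rw [hd, div_eq_iff h2]
  field_simp
  linear_combination (2*(z:ℝ) - z^2 + (z-1)^2) * Real.sin_sq_add_cos_sq φ

lemma key {ι : Type*} [DecidableEq ι] (s : Finset ι) (a b : ι → ℝ) :
    ∀ c : ℝ, 0 ≤ c → c ≤ 1 → (∀ i ∈ s, 0 ≤ a i) → (∀ i ∈ s, 0 ≤ b i) →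
      0 ≤ (∏ i ∈ s, (a i + b i * c)) ∧
      |∏ i ∈ s, (a i - b i * c)| ≤ ∏ i ∈ s, (a i + b i * c) ∧
      (∏ i ∈ s, (a i + b i * c)) + (∏ i ∈ s, (a i - b i * c)) ≤
        (∏ i ∈ s, (a i + b i)) + (∏ i ∈ s, (a i - b i)) ∧
      (∏ i ∈ s, (a i + b i * c)) - (∏ i ∈ s, (a i - b i * c)) ≤
        (∏ i ∈ s, (a i + b i)) - (∏ i ∈ s, (a i - b i)) := by
  induction s using Finset.induction_on with
  | empty => intro c hc0 hc1 _ _; simp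
  | @insert j s hjs ih =>
    intro c hc0 hc1 ha hb
    have hA : 0 ≤ a j := ha j (Finset.mem_insert_self j s)
    have hB : 0 ≤ b j := hb j (Finset.mem_insert_self j s)
    have ha' : ∀ i ∈ s, 0 ≤ a i := fun i hi => ha i (Finset.mem_insert_of_mem hi)
    have hb' : ∀ i ∈ s, 0 ≤ b i := fun i hi => hb i (Finset.mem_insert_of_mem hi)
    obtain ⟨h1, h2, h3, h4⟩ := ih c hc0 hc1 ha' hb'
    obtain ⟨g1, g2, g3, g4⟩ := ih 1 zero_le_one le_rfl ha' hb'
    simp only [mul_one] at g1 g2 g3 g4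
    rw [Finset.prod_insert hjs, Finset.prod_insert hjs, Finset.prod_insert hjs,
      Finset.prod_insert hjs]
    set P := ∏ i ∈ s, (a i + b i * c) with hP
    set Q := ∏ i ∈ s, (a i - b i * c) with hQ
    set P1 := ∏ i ∈ s, (a i + b i) with hP1
    set Q1 := ∏ i ∈ s, (a i - b i) with hQ1
    have habs : -P ≤ Q ∧ Q ≤ P := abs_le.mp h2
    have habs1 : -P1 ≤ Q1 ∧ Q1 ≤ P1 := abs_le.mp g2
    have hcPQ : c * (P - Q) ≤ P1 - Q1 := by
      rcases le_or_gt 0 (P - Q) with h | h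
      · calc c * (P - Q) ≤ 1 * (P - Q) := by nlinarith
          _ ≤ P1 - Q1 := by linarith
      · nlinarith
    have hcPQ2 : c * (P + Q) ≤ P1 + Q1 := by
      have hPQ : 0 ≤ P + Q := by linarith [habs.1]
      calc c * (P + Q) ≤ 1 * (P + Q) := by nlinarith
        _ ≤ P1 + Q1 := by linarith
    refine ⟨mul_nonneg (by nlinarith) h1, ?_, ?_, ?_⟩
    · rw [abs_mul]
      have : |a j - b j * c| ≤ a j + b j * c := by
        rw [abs_le]; constructor <;> nlinarith
      exact mul_le_mul this h2 (abs_nonneg _) (by nlinarith)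
    · nlinarith [mul_le_mul_of_nonneg_left h3 hA, mul_le_mul_of_nonneg_left hcPQ hB]
    · nlinarith [mul_le_mul_of_nonneg_left h4 hA, mul_le_mul_of_nonneg_left hcPQ2 hB]

theorem stmt_15 (n : ℕ) (hn : 1 ≤ n) (z : Fin n → ℝ) (hz : ∀ i, z i ≠ 1)
    (a : Fin n → ℝ) (ha : ∀ i, a i = 1 + 2 * z i / (z i - 1) ^ 2)
    (haa : ∀ i, 0 ≤ a i ∧ a i ≤ 1) :
    ∀ φ : ℝ, T z φ ≤ T z 0 := by
  intro φ
  set b : Fin n → ℝ := fun i => 1 - a i with hb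
  have hpe : ∀ ψ : ℝ, ∀ i, psi (z i) (Complex.exp (ψ * Complex.I))
      = a i + b i * Real.cos ψ := by
    intro ψ i
    rw [psi_exp (z i) (hz i) ψ, ← ha i, hb]
  have hpn : ∀ ψ : ℝ, ∀ i, psi (z i) (-Complex.exp (ψ * Complex.I))
      = a i - b i * Real.cos ψ := by
    intro ψ i
    rw [psi_nexp (z i) (hz i) ψ, ← ha i, hb]
  have hT : ∀ ψ : ℝ, T z ψ = (∏ i, (a i + b i * Real.cos ψ)) +
      (∏ i, (a i - b i * Real.cos ψ)) := by
    intro ψ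
    unfold T
    rw [Finset.prod_congr rfl fun i _ => hpe ψ i, Finset.prod_congr rfl fun i _ => hpn ψ i]
  have hT0 : T z 0 = (∏ i, (a i + b i)) + (∏ i, (a i - b i)) := by
    rw [hT 0]
    simp [Real.cos_zero]
  rw [hT φ, hT0]
  have ha0 : ∀ i ∈ Finset.univ, (0:ℝ) ≤ a i := fun i _ => (haa i).1
  have hb0 : ∀ i ∈ Finset.univ, (0:ℝ) ≤ b i := fun i _ => by
    simp only [hb]; linarith [(haa i).2]
  rcases le_or_gt 0 (Real.cos φ) with hc | hc
  · exact (key Finset.univ a b (Real.cos φ) hc (Real.cos_le_one φ) ha0 hb0).2.2.1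
  · have h := (key Finset.univ a b (-Real.cos φ) (by linarith) (by nlinarith [Real.neg_one_le_cos φ]) ha0 hb0).2.2.1
    have e1 : ∀ i, a i + b i * Real.cos φ = a i - b i * (-Real.cos φ) := fun i => by ring
    have e2 : ∀ i, a i - b i * Real.cos φ = a i + b i * (-Real.cos φ) := fun i => by ring
    rw [Finset.prod_congr rfl fun i _ => e1 i, Finset.prod_congr rfl fun i _ => e2 i]
    linarith [h]
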